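/- The sign of a dissection is multiplicative under refinement: if D' ⊇ D are dissections of an R-deco polygon π with D admissible, then sgn(D') = sgn(D) · ∏_α sgn(D_α, π_α), where the product is over the arrows α of D (including the root arrow) and D_α is the dissection induced by D' on the subpolygon π_α cut off by α. -/

import Mathlib

section Dissections

variable {ι : Type} [Fintype ι] [DecidableEq ι]

/-- The arrows of `E` directly visible under `α`: the maximal elements of `E` strictly
below `α` in the nesting order `lt` of arrows. -/
def maxBelow (lt : ι → ι → Prop) [DecidableRel lt] (E : Finset ι) (α : ι) : Finset ι :=
  E.filter fun β => lt β α ∧ ∀ γ ∈ E, lt β γ → ¬ lt γ α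

/-- The weight `χ(π^⊔_{E,α})` of the polygon sitting directly under the arrow `α` in
the dissection `E`: the intrinsic weight `w α` of the full region under `α` minus the
weights of the regions under the arrows of `E` directly visible under `α`. -/
def chiIn (lt : ι → ι → Prop) [DecidableRel lt] (w : ι → ℤ) (E : Finset ι) (α : ι) : ℤ :=
  w α - ∑ β ∈ maxBelow lt E α, w β

/-- The sign of a dissection `E`: `sgn(E) = ∏_{α ∈ E} ε_α^{χ(π^⊔_{E,α})}`, where
`ε_α = ±1` records whether `α` is a forward or backward arrow. -/
def sgnD (lt : ι → ι → Prop) [DecidableRel lt] (ε : ι → ℤˣ) (w : ι → ℤ)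
    (E : Finset ι) : ℤˣ :=
  ∏ α ∈ E, ε α ^ chiIn lt w E α

end Dissections


section Aux

variable {ι : Type} [Fintype ι] [DecidableEq ι]
variable (lt : ι → ι → Prop) [DecidableRel lt]

lemma units_zpow_neg' (u : ℤˣ) (k : ℤ) : u ^ (-k) = u ^ k := by
  rw [zpow_neg, Int.units_inv_eq_self]

lemma units_zpow_reduce (u : ℤˣ) (a b : ℤ) : u ^ (a + a + b) = u ^ b := by
  rw [zpow_add, zpow_add, ← sq, Int.units_sq, one_mul]

lemma prod_zpow_eq (u : ℤˣ) (s : Finset ι) (f : ι → ℤ) :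
    ∏ i ∈ s, u ^ f i = u ^ (∑ i ∈ s, f i) := by
  induction s using Finset.induction_on with
  | empty => simp
  | insert a s h ih => rw [Finset.prod_insert h, Finset.sum_insert h, ih, zpow_add]

lemma exists_max' (htrans : Transitive lt) (hirr : ∀ x, ¬ lt x x)
    (S : Finset ι) (hS : S.Nonempty) : ∃ m ∈ S, ∀ x ∈ S, ¬ lt m x := by
  haveI : IsTrans ι (Function.swap lt) := ⟨fun a b c h1 h2 => htrans h2 h1⟩
  haveI : IsIrrefl ι (Function.swap lt) := ⟨hirr⟩
  obtain ⟨m, hm, h⟩ := (Finite.wellFounded_of_trans_of_irrefl (Function.swap lt)).has_min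
    ↑S (by exact_mod_cast hS)
  exact ⟨m, by exact_mod_cast hm, fun x hx => h x (by exact_mod_cast hx)⟩

lemma exists_min' (htrans : Transitive lt) (hirr : ∀ x, ¬ lt x x)
    (S : Finset ι) (hS : S.Nonempty) : ∃ m ∈ S, ∀ x ∈ S, ¬ lt x m := by
  haveI : IsTrans ι lt := ⟨fun a b c h1 h2 => htrans h1 h2⟩
  haveI : IsIrrefl ι lt := ⟨hirr⟩
  obtain ⟨m, hm, h⟩ := (Finite.wellFounded_of_trans_of_irrefl lt).has_min
    ↑S (by exact_mod_cast hS)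
  exact ⟨m, by exact_mod_cast hm, fun x hx => h x (by exact_mod_cast hx)⟩

end Aux

set_option linter.unusedSectionVars false

section Main

variable {ι : Type} [Fintype ι] [DecidableEq ι]
variable (lt : ι → ι → Prop) [DecidableRel lt]

lemma maxBelow_filter (htrans : Transitive lt) (D' : Finset ι) (α γ : ι)
    (hγ : ∀ β, lt β γ → lt β α) :
    maxBelow lt (D'.filter fun δ => lt δ α) γ = maxBelow lt D' γ := by
  ext β
  simp only [maxBelow, Finset.mem_filter]
  constructor
  · rintro ⟨⟨hβ, hβα⟩, hβγ, hmax⟩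
    exact ⟨hβ, hβγ, fun δ hδ hβδ hδγ => hmax δ ⟨hδ, hγ δ hδγ⟩ hβδ hδγ⟩
  · rintro ⟨hβ, hβγ, hmax⟩
    exact ⟨⟨hβ, hγ β hβγ⟩, hβγ, fun δ hδ hβδ hδγ => hmax δ hδ.1 hβδ hδγ⟩

lemma maxBelow_pairwiseDisjoint (htrans : Transitive lt) (hirr : ∀ x, ¬ lt x x)
    (hforest : ∀ β α α', lt β α → lt β α' → α = α' ∨ lt α α' ∨ lt α' α)
    (E : Finset ι) :
    ∀ γ ∈ E, ∀ γ' ∈ E, γ ≠ γ' → Disjoint (maxBelow lt E γ) (maxBelow lt E γ') := by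
  intro γ hγ γ' hγ' hne
  rw [Finset.disjoint_left]
  intro β hβ hβ'
  simp only [maxBelow, Finset.mem_filter] at hβ hβ'
  obtain ⟨hβE, hβγ, hm⟩ := hβ
  obtain ⟨_, hβγ', hm'⟩ := hβ'
  rcases hforest β γ γ' hβγ hβγ' with h | h | h
  · exact hne h
  · exact hm' γ hγ hβγ h
  · exact hm γ' hγ' hβγ' h

lemma sum_chiIn (htrans : Transitive lt) (hirr : ∀ x, ¬ lt x x)
    (hforest : ∀ β α α', lt β α → lt β α' → α = α' ∨ lt α α' ∨ lt α' α)
    (w : ι → ℤ) (E : Finset ι) (top : ι) (hE : ∀ γ ∈ E, lt γ top) :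
    ∑ γ ∈ E, chiIn lt w E γ = w top - chiIn lt w E top := by
  have hbU : E.biUnion (fun γ => maxBelow lt E γ) = E \ maxBelow lt E top := by
    ext β
    simp only [Finset.mem_biUnion, Finset.mem_sdiff]
    constructor
    · rintro ⟨γ, hγ, hβ⟩
      simp only [maxBelow, Finset.mem_filter] at hβ ⊢
      obtain ⟨hβE, hβγ, hm⟩ := hβ
      refine ⟨hβE, ?_⟩
      rintro ⟨-, -, hmax⟩
      exact hmax γ hγ hβγ (hE γ hγ)
    · rintro ⟨hβE, hnm⟩
      have hS : (E.filter fun δ => lt β δ).Nonempty := by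
        by_contra hempty
        refine hnm ?_
        simp only [maxBelow, Finset.mem_filter]
        refine ⟨hβE, hE β hβE, fun δ hδ hβδ _ => ?_⟩
        exact hempty ⟨δ, Finset.mem_filter.2 ⟨hδ, hβδ⟩⟩
      obtain ⟨γ, hγ, hmin⟩ := exists_min' lt htrans hirr _ hS
      simp only [Finset.mem_filter] at hγ
      refine ⟨γ, hγ.1, ?_⟩
      simp only [maxBelow, Finset.mem_filter]
      exact ⟨hβE, hγ.2, fun δ hδ hβδ hδγ => hmin δ (Finset.mem_filter.2 ⟨hδ, hβδ⟩) hδγ⟩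
  have hmsub : maxBelow lt E top ⊆ E := Finset.filter_subset _ _
  have h1 : ∑ γ ∈ E, ∑ β ∈ maxBelow lt E γ, w β = ∑ β ∈ E, w β - ∑ β ∈ maxBelow lt E top, w β := by
    rw [← Finset.sum_biUnion (maxBelow_pairwiseDisjoint lt htrans hirr hforest E), hbU,
      Finset.sum_sdiff_eq_sub hmsub]
  simp only [chiIn, Finset.sum_sub_distrib, h1]
  ring

end Main

section Main2

variable {ι : Type} [Fintype ι] [DecidableEq ι]
variable (lt : ι → ι → Prop) [DecidableRel lt]

lemma block_eq (htrans : Transitive lt) (hirr : ∀ x, ¬ lt x x)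
    (hforest : ∀ β α α', lt β α → lt β α' → α = α' ∨ lt α α' ∨ lt α' α)
    (ε : ι → ℤˣ) (w : ι → ℤ) (D' : Finset ι) (α : ι) :
    ε α ^ chiIn lt w D' α *
        ∏ γ ∈ D'.filter (fun γ => lt γ α), ε γ ^ chiIn lt w D' γ
      = ε α ^ w α *
        ∏ γ ∈ D'.filter (fun γ => lt γ α),
          (ε α * ε γ) ^ chiIn lt w (D'.filter (fun γ => lt γ α)) γ := by
  set Eα := D'.filter (fun γ => lt γ α) with hEα
  have hEsub : ∀ γ ∈ Eα, lt γ α := fun γ hγ => (Finset.mem_filter.1 hγ).2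
  have hchi : ∀ γ ∈ Eα, chiIn lt w D' γ = chiIn lt w Eα γ := by
    intro γ hγ
    have := maxBelow_filter lt htrans D' α γ (fun β hβ => htrans hβ (hEsub γ hγ))
    rw [← hEα] at this
    simp [chiIn, this]
  have hchiα : chiIn lt w D' α = chiIn lt w Eα α := by
    have := maxBelow_filter lt htrans D' α α (fun β hβ => hβ)
    rw [← hEα] at this
    simp [chiIn, this]
  have hsum : ∑ γ ∈ Eα, chiIn lt w Eα γ = w α - chiIn lt w Eα α :=
    sum_chiIn lt htrans hirr hforest w Eα α hEsub
  calc ε α ^ chiIn lt w D' α * ∏ γ ∈ Eα, ε γ ^ chiIn lt w D' γ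
      = ε α ^ chiIn lt w Eα α * ∏ γ ∈ Eα, ε γ ^ chiIn lt w Eα γ := by
        rw [hchiα]; congr 1; exact Finset.prod_congr rfl fun γ hγ => by rw [hchi γ hγ]
    _ = ε α ^ w α * ∏ γ ∈ Eα, (ε α * ε γ) ^ chiIn lt w Eα γ := by
        rw [Finset.prod_congr rfl (fun γ _ => mul_zpow (ε α) (ε γ) _),
          Finset.prod_mul_distrib, prod_zpow_eq, hsum]
        rw [← mul_assoc, ← zpow_add]
        have h2 : w α + (w α - chiIn lt w Eα α)
            = w α + w α + (- chiIn lt w Eα α) := by ring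
        rw [h2, units_zpow_reduce, units_zpow_neg']

end Main2

section Main3

variable {ι : Type} [Fintype ι] [DecidableEq ι]
variable (lt : ι → ι → Prop) [DecidableRel lt]

lemma root_chi (htrans : Transitive lt) (hirr : ∀ x, ¬ lt x x)
    (hforest : ∀ β α α', lt β α → lt β α' → α = α' ∨ lt α α' ∨ lt α' α)
    (w : ι → ℤ) (D D' : Finset ι) (hsub : D ⊆ D')
    (hadm : ∀ α ∈ D, ∀ β ∈ D, ¬ lt α β)
    (γ : ι) (hγD' : γ ∈ D') (hγD : γ ∉ D) (hγR : ∀ α ∈ D, ¬ lt γ α) :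
    chiIn lt (fun δ => w δ - ∑ α ∈ D.filter (fun α => lt α δ), w α)
      (D'.filter fun δ => δ ∉ D ∧ ∀ α ∈ D, ¬ lt δ α) γ = chiIn lt w D' γ := by
  set R := D'.filter fun δ => δ ∉ D ∧ ∀ α ∈ D, ¬ lt δ α with hR
  set M := (maxBelow lt D' γ).filter (· ∈ D) with hM
  have hRmem : ∀ δ, δ ∈ R ↔ δ ∈ D' ∧ δ ∉ D ∧ ∀ α ∈ D, ¬ lt δ α := by
    intro δ; simp [hR, Finset.mem_filter, and_assoc]
  have hclass : ∀ δ ∈ D', δ ∉ D → δ ∉ R → ∃ α ∈ D, lt δ α := by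
    intro δ hδ hδD hδR
    by_contra h
    push_neg at h
    exact hδR ((hRmem δ).2 ⟨hδ, hδD, h⟩)
  -- identity (i)
  have hi : maxBelow lt D' γ = maxBelow lt R γ ∪ M := by
    ext β
    simp only [Finset.mem_union]
    constructor
    · intro hβ
      obtain ⟨hβD', hβγ, hm⟩ := Finset.mem_filter.1 hβ
      by_cases hβD : β ∈ D
      · exact Or.inr (Finset.mem_filter.2 ⟨hβ, hβD⟩)
      · left
        have hβR : β ∈ R := by
          refine (hRmem β).2 ⟨hβD', hβD, fun α hα hβα => ?_⟩
          rcases hforest β α γ hβα hβγ with h | h | h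
          · exact hγD (h ▸ hα)
          · exact hm α (hsub hα) hβα h
          · exact hγR α hα h
        exact Finset.mem_filter.2 ⟨hβR, hβγ,
          fun δ hδ hβδ hδγ => hm δ ((hRmem δ).1 hδ).1 hβδ hδγ⟩
    · rintro (hβ | hβ)
      · obtain ⟨hβR, hβγ, hmR⟩ := Finset.mem_filter.1 hβ
        obtain ⟨hβD', hβD, hβno⟩ := (hRmem β).1 hβR
        refine Finset.mem_filter.2 ⟨hβD', hβγ, fun δ hδ hβδ hδγ => ?_⟩
        by_cases hδD : δ ∈ D
        · exact hβno δ hδD hβδ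
        by_cases hδR : δ ∈ R
        · exact hmR δ hδR hβδ hδγ
        · obtain ⟨α, hα, hδα⟩ := hclass δ hδ hδD hδR
          exact hβno α hα (htrans hβδ hδα)
      · exact Finset.mem_of_mem_filter β hβ
  have hidisj : Disjoint (maxBelow lt R γ) M := by
    rw [Finset.disjoint_left]
    intro β hβ hβM
    exact ((hRmem β).1 (Finset.mem_of_mem_filter β hβ)).2.1 ((Finset.mem_filter.1 hβM).2)
  -- identity (ii)
  have hii : D.filter (fun α => lt α γ)
      = M ∪ (maxBelow lt R γ).biUnion (fun β => D.filter fun α => lt α β) := by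
    ext α
    simp only [Finset.mem_union, Finset.mem_biUnion]
    constructor
    · intro hα
      obtain ⟨hαD, hαγ⟩ := Finset.mem_filter.1 hα
      by_cases hmax : ∀ δ ∈ D', lt α δ → ¬ lt δ γ
      · exact Or.inl (Finset.mem_filter.2 ⟨Finset.mem_filter.2 ⟨hsub hαD, hαγ, hmax⟩, hαD⟩)
      · right
        push_neg at hmax
        obtain ⟨δ₀, hδ₀D', hαδ₀, hδ₀γ⟩ := hmax
        have hδR : ∀ δ ∈ D', lt α δ → lt δ γ → δ ∈ R := by
          intro δ hδ hαδ hδγ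
          by_cases hδD : δ ∈ D
          · exact absurd hαδ (hadm α hαD δ hδD)
          by_cases hδR : δ ∈ R
          · exact hδR
          · obtain ⟨α'', hα'', hδα''⟩ := hclass δ hδ hδD hδR
            exact absurd (htrans hαδ hδα'') (hadm α hαD α'' hα'')
        have hS : (R.filter fun δ => lt α δ ∧ lt δ γ).Nonempty :=
          ⟨δ₀, Finset.mem_filter.2 ⟨hδR δ₀ hδ₀D' hαδ₀ hδ₀γ, hαδ₀, hδ₀γ⟩⟩
        obtain ⟨β, hβS, hβmax⟩ := exists_max' lt htrans hirr _ hS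
        obtain ⟨hβR, hαβ, hβγ⟩ := Finset.mem_filter.1 hβS
        refine ⟨β, Finset.mem_filter.2 ⟨hβR, hβγ, fun δ hδ hβδ hδγ => ?_⟩,
          Finset.mem_filter.2 ⟨hαD, hαβ⟩⟩
        exact hβmax δ (Finset.mem_filter.2 ⟨hδ, htrans hαβ hβδ, hδγ⟩) hβδ
    · rintro (hα | ⟨β, hβ, hα⟩)
      · obtain ⟨hα', hαD⟩ := Finset.mem_filter.1 hα
        exact Finset.mem_filter.2 ⟨hαD, (Finset.mem_filter.1 hα').2.1⟩
      · obtain ⟨hαD, hαβ⟩ := Finset.mem_filter.1 hα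
        have hβγ : lt β γ := (Finset.mem_filter.1 hβ).2.1
        exact Finset.mem_filter.2 ⟨hαD, htrans hαβ hβγ⟩
  have hiidisj : Disjoint M ((maxBelow lt R γ).biUnion (fun β => D.filter fun α => lt α β)) := by
    rw [Finset.disjoint_left]
    intro α hαM hαB
    obtain ⟨β, hβ, hα⟩ := Finset.mem_biUnion.1 hαB
    obtain ⟨hαmax, hαD⟩ := Finset.mem_filter.1 hαM
    obtain ⟨_, _, hm⟩ := Finset.mem_filter.1 hαmax
    have hβR : β ∈ R := Finset.mem_of_mem_filter β hβ
    exact hm β ((hRmem β).1 hβR).1 ((Finset.mem_filter.1 hα).2) ((Finset.mem_filter.1 hβ).2.1)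
  have hpd : ∀ β ∈ maxBelow lt R γ, ∀ β' ∈ maxBelow lt R γ, β ≠ β' →
      Disjoint (D.filter fun α => lt α β) (D.filter fun α => lt α β') := by
    intro β hβ β' hβ' hne
    rw [Finset.disjoint_left]
    intro α hα hα'
    have h1 : lt α β := (Finset.mem_filter.1 hα).2
    have h2 : lt α β' := (Finset.mem_filter.1 hα').2
    obtain ⟨hβR, hβγ, hm⟩ := Finset.mem_filter.1 hβ
    obtain ⟨hβ'R, hβ'γ, hm'⟩ := Finset.mem_filter.1 hβ'
    rcases hforest α β β' h1 h2 with h | h | h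
    · exact hne h
    · exact hm β' hβ'R h hβ'γ
    · exact hm' β hβR h hβγ
  -- arithmetic
  have e1 : ∑ β ∈ maxBelow lt D' γ, w β
      = ∑ β ∈ maxBelow lt R γ, w β + ∑ α ∈ M, w α := by
    rw [hi, Finset.sum_union hidisj]
  have e2 : ∑ α ∈ D.filter (fun α => lt α γ), w α
      = ∑ α ∈ M, w α + ∑ β ∈ maxBelow lt R γ, ∑ α ∈ D.filter (fun α => lt α β), w α := by
    rw [hii, Finset.sum_union hiidisj, Finset.sum_biUnion hpd]
  simp only [chiIn, Finset.sum_sub_distrib]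
  linarith

end Main3


/-- The sign of a dissection is multiplicative under refinement: if
`D' ⊇ D` are dissections of an `R`-deco polygon `π` with `D` admissible (its arrows
are pairwise non-nested), then
`sgn(D') = sgn(D) · ∏_α sgn(D_α, π_α)`, the product running over the arrows `α` of
`D` *including the root arrow*: for `α ∈ D`, `D_α` is the dissection induced by `D'`
on the subpolygon `π_α` cut off by `α` (its arrows are those of `D'` nested below
`α`; inside `π_α`, whose orientation is reversed when `α` is backward, the arrow `γ`
has sign `ε_α · ε_γ`), and the root factor is the sign of the dissection induced by
`D'` on the root polygon (whose arrows are those of `D'` neither in `D` nor below any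
arrow of `D`, with weights collapsed by removing the regions under the arrows of
`D`). Arrows are modeled by their nesting order `lt` (a transitive, irreflexive
relation whose down-sets form a forest) and intrinsic weights `w`. -/
theorem sign_multiplicative_under_refinement
    (ι : Type) [Fintype ι] [DecidableEq ι]
    (lt : ι → ι → Prop) [DecidableRel lt]
    (htrans : Transitive lt) (hirr : ∀ x, ¬ lt x x)
    (hforest : ∀ β α α', lt β α → lt β α' → α = α' ∨ lt α α' ∨ lt α' α)
    (ε : ι → ℤˣ) (w : ι → ℤ)
    (D D' : Finset ι) (hsub : D ⊆ D')
    (hadm : ∀ α ∈ D, ∀ β ∈ D, ¬ lt α β) :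
    sgnD lt ε w D'
      = sgnD lt ε w D *
        ((∏ α ∈ D, ∏ γ ∈ D'.filter (fun γ => lt γ α),
            (ε α * ε γ) ^ chiIn lt w (D'.filter (fun γ => lt γ α)) γ) *
         (∏ γ ∈ D'.filter (fun γ => γ ∉ D ∧ ∀ α ∈ D, ¬ lt γ α),
            ε γ ^ chiIn lt (fun δ => w δ - ∑ α ∈ D.filter (fun α => lt α δ), w α)
              (D'.filter (fun γ => γ ∉ D ∧ ∀ α ∈ D, ¬ lt γ α)) γ)) := by
  classical
  have hdisjE : ∀ α ∈ D, ∀ α' ∈ D, α ≠ α' →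
      Disjoint (D'.filter fun γ => lt γ α) (D'.filter fun γ => lt γ α') := by
    intro α hα α' hα' hne
    rw [Finset.disjoint_left]
    intro γ h1 h2
    rcases hforest γ α α' (Finset.mem_filter.1 h1).2 (Finset.mem_filter.1 h2).2 with h | h | h
    · exact hne h
    · exact hadm α hα α' hα' h
    · exact hadm α' hα' α hα h
  have hdisj1 : Disjoint D (D.biUnion fun α => D'.filter fun γ => lt γ α) := by
    rw [Finset.disjoint_left]
    intro α hα hαB
    obtain ⟨α', hα', h⟩ := Finset.mem_biUnion.1 hαB
    exact hadm α hα α' hα' (Finset.mem_filter.1 h).2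
  have hdisj2 : Disjoint (D ∪ D.biUnion fun α => D'.filter fun γ => lt γ α)
      (D'.filter fun γ => γ ∉ D ∧ ∀ α ∈ D, ¬ lt γ α) := by
    rw [Finset.disjoint_right]
    intro γ hγ
    obtain ⟨hγD', hγD, hγno⟩ := Finset.mem_filter.1 hγ
    rw [Finset.mem_union]
    push_neg
    refine ⟨hγD, fun h => ?_⟩
    obtain ⟨α, hα, h2⟩ := Finset.mem_biUnion.1 h
    exact hγno α hα (Finset.mem_filter.1 h2).2
  have hpart : D' = (D ∪ D.biUnion fun α => D'.filter fun γ => lt γ α) ∪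
      D'.filter fun γ => γ ∉ D ∧ ∀ α ∈ D, ¬ lt γ α := by
    ext δ
    simp only [Finset.mem_union, Finset.mem_biUnion]
    constructor
    · intro hδ
      by_cases h1 : δ ∈ D
      · exact Or.inl (Or.inl h1)
      by_cases h2 : δ ∈ D'.filter fun γ => γ ∉ D ∧ ∀ α ∈ D, ¬ lt γ α
      · exact Or.inr h2
      · have h3 : ∃ α ∈ D, lt δ α := by
          by_contra h
          push_neg at h
          exact h2 (Finset.mem_filter.2 ⟨hδ, h1, h⟩)
        obtain ⟨α, hα, h3⟩ := h3
        exact Or.inl (Or.inr ⟨α, hα, Finset.mem_filter.2 ⟨hδ, h3⟩⟩)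
    · rintro ((h | ⟨α, hα, h⟩) | h)
      · exact hsub h
      · exact Finset.mem_of_mem_filter δ h
      · exact Finset.mem_of_mem_filter δ h
  have key : sgnD lt ε w D'
      = (∏ α ∈ D, ε α ^ chiIn lt w D' α) *
          (∏ α ∈ D, ∏ γ ∈ D'.filter fun γ => lt γ α, ε γ ^ chiIn lt w D' γ) *
        ∏ γ ∈ D'.filter (fun γ => γ ∉ D ∧ ∀ α ∈ D, ¬ lt γ α), ε γ ^ chiIn lt w D' γ := by
    rw [sgnD, Finset.prod_congr hpart fun _ _ => rfl, Finset.prod_union hdisj2,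
      Finset.prod_union hdisj1, Finset.prod_biUnion hdisjE]
  have hblock : (∏ α ∈ D, ε α ^ chiIn lt w D' α) *
        (∏ α ∈ D, ∏ γ ∈ D'.filter fun γ => lt γ α, ε γ ^ chiIn lt w D' γ)
      = sgnD lt ε w D *
        ∏ α ∈ D, ∏ γ ∈ D'.filter (fun γ => lt γ α),
          (ε α * ε γ) ^ chiIn lt w (D'.filter (fun γ => lt γ α)) γ := by
    rw [← Finset.prod_mul_distrib,
      Finset.prod_congr rfl fun α _ => block_eq lt htrans hirr hforest ε w D' α,
      Finset.prod_mul_distrib]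
    congr 1
    rw [sgnD]
    refine Finset.prod_congr rfl fun α hα => ?_
    have hmb : maxBelow lt D α = ∅ := by
      rw [Finset.eq_empty_iff_forall_notMem]
      intro β hβ
      obtain ⟨hβD, hβα, -⟩ := Finset.mem_filter.1 hβ
      exact hadm β hβD α hα hβα
    rw [chiIn, hmb]
    simp
  have hroot : (∏ γ ∈ D'.filter (fun γ => γ ∉ D ∧ ∀ α ∈ D, ¬ lt γ α),
        ε γ ^ chiIn lt w D' γ)
      = ∏ γ ∈ D'.filter (fun γ => γ ∉ D ∧ ∀ α ∈ D, ¬ lt γ α),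
          ε γ ^ chiIn lt (fun δ => w δ - ∑ α ∈ D.filter (fun α => lt α δ), w α)
            (D'.filter (fun γ => γ ∉ D ∧ ∀ α ∈ D, ¬ lt γ α)) γ := by
    refine Finset.prod_congr rfl fun γ hγ => ?_
    obtain ⟨hγD', hγD, hγno⟩ := Finset.mem_filter.1 hγ
    rw [root_chi lt htrans hirr hforest w D D' hsub hadm γ hγD' hγD hγno]
  rw [key, hblock, hroot, mul_assoc]
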